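/- For every real α ∈ [0,1) and every real x ≥ 1, ℓ_α(x) ≥ f_α(x), where ℓ_α(x) := ((1+α)x/(x+1))·log((αx+1)/(1-α)) − log((α(x-1)+1)/(1-α)) and f_α(x) := -(1-α)·(x/(x+1))·log(1/(1-α)) + ((αx+1)/(x+1))·log(αx+1). -/

import Mathlib

open Real Set

lemma key_ineq (x : ℝ) (hx : 1 ≤ x) (β : ℝ) (hβ : 0 ≤ β) :
    0 ≤ (x-1)/(x+1) * Real.log (1+β*(x+1)) + Real.log (1+β) - Real.log (1+β*x) := by
  have hx1 : (0:ℝ) < x + 1 := by linarith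
  set f : ℝ → ℝ := fun t => (x-1)/(x+1) * Real.log (1+t*(x+1)) + Real.log (1+t) - Real.log (1+t*x) with hf
  have hpos : ∀ t : ℝ, 0 ≤ t → 0 < 1 + t*(x+1) ∧ 0 < 1 + t ∧ 0 < 1 + t*x := by
    intro t ht
    refine ⟨by nlinarith, by linarith, by nlinarith⟩
  have hderivAt : ∀ b : ℝ, 0 < b → HasDerivAt f
      ((x-1)/(x+1) * ((1+b*(x+1))⁻¹ * (x+1)) + (1+b)⁻¹ * 1 - (1+b*x)⁻¹ * x) b := by
    intro b hb
    obtain ⟨p1, p2, p3⟩ := hpos b hb.le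
    have d1 : HasDerivAt (fun t : ℝ => 1 + t*(x+1)) (x+1) b := by
      simpa using ((hasDerivAt_id b).mul_const (x+1)).const_add 1
    have d2 : HasDerivAt (fun t : ℝ => 1 + t) 1 b := by
      simpa using (hasDerivAt_id b).const_add 1
    have d3 : HasDerivAt (fun t : ℝ => 1 + t*x) x b := by
      simpa using ((hasDerivAt_id b).mul_const x).const_add 1
    have l1 := (Real.hasDerivAt_log p1.ne').comp b d1
    have l2 := (Real.hasDerivAt_log p2.ne').comp b d2
    have l3 := (Real.hasDerivAt_log p3.ne').comp b d3
    exact ((l1.const_mul ((x-1)/(x+1))).add l2).sub l3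
  have hmono : MonotoneOn f (Icc 0 β) := by
    apply monotoneOn_of_deriv_nonneg (convex_Icc 0 β)
    · apply ContinuousOn.sub
      apply ContinuousOn.add
      · exact (continuousOn_const.mul ((continuousOn_const.add
          (continuousOn_id.mul continuousOn_const)).log
          (fun t ht => (hpos t ht.1).1.ne')))
      · exact (continuousOn_const.add continuousOn_id).log (fun t ht => (hpos t ht.1).2.1.ne')
      · exact (continuousOn_const.add (continuousOn_id.mul continuousOn_const)).log
          (fun t ht => (hpos t ht.1).2.2.ne')
    · intro b hb
      rw [interior_Icc] at hb
      exact (hderivAt b hb.1).differentiableAt.differentiableWithinAt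
    · intro b hb
      rw [interior_Icc] at hb
      obtain ⟨p1, p2, p3⟩ := hpos b hb.1.le
      rw [(hderivAt b hb.1).deriv]
      have heq : (x-1)/(x+1) * ((1+b*(x+1))⁻¹ * (x+1)) + (1+b)⁻¹ * 1 - (1+b*x)⁻¹ * x
          = x*(x-1)*b^2 / ((1+b*(x+1)) * ((1+b) * (1+b*x))) := by
        rw [inv_mul_eq_div, inv_mul_eq_div, inv_mul_eq_div, div_mul_div_comm, div_add_div _ _ (by positivity) p2.ne', div_sub_div _ _ (by positivity) p3.ne', div_eq_div_iff (by positivity) (by positivity)]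
        ring
      rw [heq]
      apply div_nonneg
      · exact mul_nonneg (mul_nonneg (by linarith) (by linarith)) (sq_nonneg b)
      · positivity
  have h0 : f 0 = 0 := by simp [hf]
  have := hmono (left_mem_Icc.mpr hβ) (right_mem_Icc.mpr hβ) hβ
  rw [h0] at this
  exact this

theorem stmt_4 (α : ℝ) (h0 : 0 ≤ α) (h1 : α < 1) (x : ℝ) (hx : 1 ≤ x) :
    ((1 + α) * x / (x + 1)) * Real.log ((α * x + 1) / (1 - α))
        - Real.log ((α * (x - 1) + 1) / (1 - α))
      ≥ -(1 - α) * (x / (x + 1)) * Real.log (1 / (1 - α))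
        + ((α * x + 1) / (x + 1)) * Real.log (α * x + 1) := by
  have ha : (0:ℝ) < 1 - α := by linarith
  set β := α / (1 - α) with hβdef
  have hβ : 0 ≤ β := div_nonneg h0 ha.le
  have hx1 : (0:ℝ) < x + 1 := by linarith
  have hu : (α * x + 1) / (1 - α) = 1 + β * (x+1) := by rw [hβdef]; field_simp; ring
  have hv : (α * (x - 1) + 1) / (1 - α) = 1 + β * x := by rw [hβdef]; field_simp; ring
  have hL : 1 / (1 - α) = 1 + β := by rw [hβdef]; field_simp; ring
  have hp1 : (0:ℝ) < 1 + β * (x+1) := by positivity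
  have hp3 : (0:ℝ) < 1 + β := by positivity
  have hax : Real.log (α * x + 1) = Real.log (1 + β * (x+1)) - Real.log (1 + β) := by
    rw [← hu, ← hL, Real.log_div (by nlinarith) ha.ne', Real.log_div one_ne_zero ha.ne',
      Real.log_one]
    ring
  rw [hu, hv, hL, hax, ge_iff_le, ← sub_nonneg]
  have key := key_ineq x hx β hβ
  have heq : (1 + α) * x / (x + 1) * Real.log (1 + β * (x + 1))
        - Real.log (1 + β * x)
      - (-(1 - α) * (x / (x + 1)) * Real.log (1 + β)
        + (α * x + 1) / (x + 1) * (Real.log (1 + β * (x+1)) - Real.log (1 + β)))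
      = (x-1)/(x+1) * Real.log (1+β*(x+1)) + Real.log (1+β) - Real.log (1+β*x) := by
    field_simp
    ring
  rw [heq]
  exact key
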